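/- Let K be a field, n, m ≥ 1, A = FreeAlgebra K (Fin n), and let I and J be two-sided ideals of A such that A/I and A/J are isomorphic as K-algebras and A/I is generated as a K-algebra by m elements. Let B = FreeAlgebra K (Fin n ⊕ Fin m), let κ : A →ₐ[K] B be the canonical embedding onto the subalgebra generated by the x-generators, and let I' (resp. J') be the two-sided ideal of B generated by κ(I) (resp. κ(J)) together with the y-generators y_1, …, y_m. Then there exists a graded K-algebra isomorphism R_B(I') ≅ R_B(J') that maps T to T (i.e., the extended Rees algebras are K[t]-isomorphic; this is the statement that R_A(I)⟨y_1,…,y_m⟩ ≅_{K[t]} R_A(J)⟨y_1,…,y_m⟩, via the identification R_B(I') = R_A(I)⟨T⁻¹y_1,…,T⁻¹y_m⟩). -/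

import Mathlib

open scoped AddMonoidAlgebra

section Rees

variable {K : Type} [Field K] {A : Type} [Ring A] [Algebra K A]

/-- A `K`-submodule of `A` is a two-sided ideal if it absorbs multiplication by arbitrary
ring elements on both sides. -/
def Submodule.IsTwoSidedIdeal (I : Submodule K A) : Prop :=
  ∀ a : A, ∀ x ∈ I, a * x ∈ I ∧ x * a ∈ I

theorem Submodule.IsTwoSidedIdeal.mul_mem_pow_left {I : Submodule K A}
    (hI : I.IsTwoSidedIdeal) {l : ℕ} (hl : l ≠ 0) (a : A) {x : A} (hx : x ∈ I ^ l) :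
    a * x ∈ I ^ l := by
  obtain ⟨l, rfl⟩ := Nat.exists_eq_succ_of_ne_zero hl
  rw [pow_succ'] at hx ⊢
  refine Submodule.mul_induction_on hx (fun m hm n hn => ?_) (fun x y hx hy => ?_)
  · rw [← mul_assoc]
    exact Submodule.mul_mem_mul ((hI a m hm).1) hn
  · rw [mul_add]
    exact add_mem hx hy

theorem Submodule.IsTwoSidedIdeal.mul_mem_pow_right {I : Submodule K A}
    (hI : I.IsTwoSidedIdeal) {l : ℕ} (hl : l ≠ 0) (a : A) {x : A} (hx : x ∈ I ^ l) :
    x * a ∈ I ^ l := by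
  obtain ⟨l, rfl⟩ := Nat.exists_eq_succ_of_ne_zero hl
  rw [pow_succ] at hx ⊢
  refine Submodule.mul_induction_on hx (fun m hm n hn => ?_) (fun x y hx hy => ?_)
  · rw [mul_assoc]
    exact Submodule.mul_mem_mul hm ((hI a n hn).2)
  · rw [add_mul]
    exact add_mem hx hy

theorem Submodule.IsTwoSidedIdeal.pow_le_pow {I : Submodule K A}
    (hI : I.IsTwoSidedIdeal) {l m : ℕ} (hl : l ≠ 0) (h : l ≤ m) :
    I ^ m ≤ I ^ l := by
  induction m, h using Nat.le_induction with
  | base => exact le_rfl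
  | succ m hm ih =>
      rw [pow_succ]
      refine Submodule.mul_le.mpr fun x hx y hy => ?_
      exact hI.mul_mem_pow_right hl y (ih hx)

/-- The extended Rees algebra of a two-sided ideal `I` of `A`:  the subalgebra of the Laurent
polynomial algebra `A[T,T⁻¹] = AddMonoidAlgebra A ℤ` consisting of the Laurent polynomials
`∑ₖ aₖ Tᵏ` with `aₖ ∈ I^(-k)` for every `k < 0`. -/
def extendedReesAlgebra (I : Submodule K A) (hI : I.IsTwoSidedIdeal) :
    Subalgebra K (AddMonoidAlgebra A ℤ) where
  carrier := {p | ∀ k : ℤ, k < 0 → p.coeff k ∈ I ^ (-k).toNat}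
  zero_mem' := by
    intro k hk
    simp only [AddMonoidAlgebra.coeff_zero, Finsupp.coe_zero, Pi.zero_apply]
    exact zero_mem _
  add_mem' := by
    intro p q hp hq k hk
    rw [AddMonoidAlgebra.coeff_add, Finsupp.add_apply]
    exact add_mem (hp k hk) (hq k hk)
  one_mem' := by
    intro k hk
    rw [AddMonoidAlgebra.one_def, AddMonoidAlgebra.coeff_single, Finsupp.single_apply, if_neg (by omega)]
    exact zero_mem _
  mul_mem' := by
    intro p q hp hq k hk
    classical
    rw [AddMonoidAlgebra.coeff_mul]
    refine Submodule.sum_mem _ fun i hi => Submodule.sum_mem _ fun j hj => ?_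
    show (if i + j = k then p.coeff i * q.coeff j else 0) ∈ I ^ (-k).toNat
    split_ifs with hij
    · by_cases h1 : i < 0 <;> by_cases h2 : j < 0
      · have h3 : (-i).toNat + (-j).toNat = (-k).toNat := by omega
        rw [← h3, pow_add]
        exact Submodule.mul_mem_mul (hp i h1) (hq j h2)
      · exact hI.mul_mem_pow_right (by omega) _
          (hI.pow_le_pow (by omega) (by omega) (hp i h1))
      · exact hI.mul_mem_pow_left (by omega) _
          (hI.pow_le_pow (by omega) (by omega) (hq j h2))
      · omega
    · exact zero_mem _
  algebraMap_mem' := by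
    intro c k hk
    rw [AddMonoidAlgebra.coe_algebraMap]
    simp only [Function.comp_apply]
    rw [AddMonoidAlgebra.coeff_single, Finsupp.single_apply, if_neg (by omega)]
    exact zero_mem _

end Rees

section Rees2

variable {K : Type} [Field K] {A : Type} [Ring A] [Algebra K A]

/-- The Laurent variable `T` in `A[T,T⁻¹] = AddMonoidAlgebra A ℤ`. -/
noncomputable def laurentT (A : Type) [Ring A] : AddMonoidAlgebra A ℤ :=
  AddMonoidAlgebra.single 1 1

theorem laurentT_mem (I : Submodule K A) (hI : I.IsTwoSidedIdeal) :
    laurentT A ∈ extendedReesAlgebra I hI := by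
  intro k hk
  rw [laurentT, AddMonoidAlgebra.coeff_single, Finsupp.single_apply, if_neg (by omega)]
  exact zero_mem _

/-- An algebra isomorphism between two extended Rees algebras is *graded* if it maps elements
homogeneous of degree `k` to elements homogeneous of degree `k`, for every `k ∈ ℤ`. -/
def IsGradedReesIso {B : Type} [Ring B] [Algebra K B]
    {I : Submodule K A} {hI : I.IsTwoSidedIdeal}
    {J : Submodule K B} {hJ : J.IsTwoSidedIdeal}
    (e : extendedReesAlgebra I hI ≃ₐ[K] extendedReesAlgebra J hJ) : Prop :=
  ∀ (x : extendedReesAlgebra I hI) (k : ℤ),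
    (x : AddMonoidAlgebra A ℤ).coeff.support ⊆ {k} →
      ((e x : AddMonoidAlgebra B ℤ)).coeff.support ⊆ {k}

end Rees2

section Span

variable (K : Type) [Field K] {B : Type} [Ring B] [Algebra K B]

/-- The two-sided ideal generated by a set, as a `K`-submodule. -/
def twoSidedClosure (s : Set B) : Submodule K B where
  carrier := (TwoSidedIdeal.span s : Set B)
  zero_mem' := zero_mem _
  add_mem' := fun h1 h2 => add_mem h1 h2
  smul_mem' := fun c x hx => by
    rw [Algebra.smul_def]
    exact TwoSidedIdeal.mul_mem_left _ _ _ hx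

theorem twoSidedClosure_isTwoSidedIdeal (s : Set B) :
    (twoSidedClosure K s).IsTwoSidedIdeal :=
  fun _a _x hx => ⟨TwoSidedIdeal.mul_mem_left _ _ _ hx, TwoSidedIdeal.mul_mem_right _ _ _ hx⟩

theorem subset_twoSidedClosure (s : Set B) : s ⊆ (twoSidedClosure K s : Set B) :=
  TwoSidedIdeal.subset_span

end Span


section LaurentMap

variable {K : Type} [Field K] {B C : Type} [Ring B] [Algebra K B] [Ring C] [Algebra K C]

/-- Coefficientwise map on Laurent polynomials, as a bare function. -/
noncomputable def lmapFun (f : B →ₐ[K] C) :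
    AddMonoidAlgebra B ℤ → AddMonoidAlgebra C ℤ :=
  fun p => AddMonoidAlgebra.ofCoeff (Finsupp.mapRange ⇑f (map_zero f) p.coeff)

theorem lmapFun_apply (f : B →ₐ[K] C) (p : AddMonoidAlgebra B ℤ) (k : ℤ) :
    (lmapFun f p).coeff k = f (p.coeff k) := Finsupp.mapRange_apply (hf := map_zero f)

theorem lmapFun_single (f : B →ₐ[K] C) (a : ℤ) (b : B) :
    lmapFun f (AddMonoidAlgebra.single a b) = AddMonoidAlgebra.single a (f b) :=
  congrArg AddMonoidAlgebra.ofCoeff Finsupp.mapRange_single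

theorem lmapFun_add (f : B →ₐ[K] C) (p q : AddMonoidAlgebra B ℤ) :
    lmapFun f (p + q) = lmapFun f p + lmapFun f q := congrArg AddMonoidAlgebra.ofCoeff (Finsupp.mapRange_add (map_add f) p.coeff q.coeff)

theorem lmapFun_mul (f : B →ₐ[K] C) (p q : AddMonoidAlgebra B ℤ) :
    lmapFun f (p * q) = lmapFun f p * lmapFun f q := by
  induction p using AddMonoidAlgebra.induction_linear with
  | zero => show lmapFun f (0 * q) = lmapFun f 0 * lmapFun f q
            rw [zero_mul, show lmapFun f 0 = 0 from congrArg AddMonoidAlgebra.ofCoeff Finsupp.mapRange_zero, zero_mul]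
  | add p1 p2 h1 h2 => rw [add_mul, lmapFun_add, lmapFun_add, h1, h2, add_mul]
  | single a b =>
      induction q using AddMonoidAlgebra.induction_linear with
      | zero => show lmapFun f (_ * 0) = _ * lmapFun f 0
                rw [mul_zero, show lmapFun f 0 = 0 from congrArg AddMonoidAlgebra.ofCoeff Finsupp.mapRange_zero, mul_zero]
      | add q1 q2 h1 h2 => rw [mul_add, lmapFun_add, lmapFun_add, h1, h2, mul_add]
      | single a' b' =>
          show lmapFun f (AddMonoidAlgebra.single a b * AddMonoidAlgebra.single a' b') = _
          rw [AddMonoidAlgebra.single_mul_single, lmapFun_single, lmapFun_single, lmapFun_single,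
            AddMonoidAlgebra.single_mul_single, map_mul]

/-- Coefficientwise map on Laurent polynomial algebras, as an algebra homomorphism. -/
noncomputable def laurentMap (f : B →ₐ[K] C) :
    AddMonoidAlgebra B ℤ →ₐ[K] AddMonoidAlgebra C ℤ where
  toFun := lmapFun f
  map_one' := by
    rw [AddMonoidAlgebra.one_def, AddMonoidAlgebra.one_def, lmapFun_single, map_one]
  map_mul' := lmapFun_mul f
  map_zero' := by show lmapFun f 0 = 0; exact congrArg AddMonoidAlgebra.ofCoeff Finsupp.mapRange_zero
  map_add' := lmapFun_add f
  commutes' := fun c => by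
    show lmapFun f _ = _
    simp only [AddMonoidAlgebra.coe_algebraMap, Function.comp_apply]
    rw [lmapFun_single, AlgHom.commutes]

theorem laurentMap_apply (f : B →ₐ[K] C) (p : AddMonoidAlgebra B ℤ) (k : ℤ) :
    (laurentMap f p).coeff k = f (p.coeff k) := by
  show (lmapFun f p).coeff k = f (p.coeff k)
  exact lmapFun_apply f p k

theorem laurentMap_support (f : B →ₐ[K] C) (p : AddMonoidAlgebra B ℤ) :
    (laurentMap f p).coeff.support ⊆ p.coeff.support := by
  show (lmapFun f p).coeff.support ⊆ p.coeff.support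
  exact Finsupp.support_mapRange (hf := map_zero f)

end LaurentMap

section Transfer

variable {K : Type} [Field K]

theorem rees_transfer {B : Type} [Ring B] [Algebra K B] (α : B ≃ₐ[K] B)
    {I' J' : Submodule K B} (hI' : I'.IsTwoSidedIdeal) (hJ' : J'.IsTwoSidedIdeal)
    (hmap : Submodule.map α.toLinearMap J' = I') :
    ∃ e : extendedReesAlgebra I' hI' ≃ₐ[K] extendedReesAlgebra J' hJ',
      IsGradedReesIso e ∧
        e ⟨laurentT _, laurentT_mem _ _⟩ = ⟨laurentT _, laurentT_mem _ _⟩ := by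
  have hmap' : Submodule.map α.symm.toLinearMap I' = J' := by
    rw [← hmap, ← Submodule.map_comp]
    rw [show α.symm.toLinearMap ∘ₗ α.toLinearMap = LinearMap.id from by ext z; simp]
    exact Submodule.map_id J'
  have hpowJ : ∀ t : ℕ, Submodule.map α.symm.toLinearMap (I' ^ t) = J' ^ t := fun t => by
    rw [show α.symm.toLinearMap = α.symm.toAlgHom.toLinearMap from rfl, Submodule.map_pow]
    rw [show α.symm.toAlgHom.toLinearMap = α.symm.toLinearMap from rfl, hmap']
  have hpowI : ∀ t : ℕ, Submodule.map α.toLinearMap (J' ^ t) = I' ^ t := fun t => by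
    rw [show α.toLinearMap = α.toAlgHom.toLinearMap from rfl, Submodule.map_pow]
    rw [show α.toAlgHom.toLinearMap = α.toLinearMap from rfl, hmap]
  have hmemF : ∀ p ∈ extendedReesAlgebra I' hI',
      laurentMap α.symm.toAlgHom p ∈ extendedReesAlgebra J' hJ' := by
    intro p hp k hk
    rw [laurentMap_apply, ← hpowJ]
    exact Submodule.mem_map_of_mem (hp k hk)
  have hmemG : ∀ p ∈ extendedReesAlgebra J' hJ',
      laurentMap α.toAlgHom p ∈ extendedReesAlgebra I' hI' := by
    intro p hp k hk
    rw [laurentMap_apply, ← hpowI]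
    exact Submodule.mem_map_of_mem (hp k hk)
  let F : extendedReesAlgebra I' hI' →ₐ[K] extendedReesAlgebra J' hJ' :=
    AlgHom.codRestrict ((laurentMap α.symm.toAlgHom).comp (extendedReesAlgebra I' hI').val)
      (extendedReesAlgebra J' hJ') (fun p => hmemF p p.2)
  let G : extendedReesAlgebra J' hJ' →ₐ[K] extendedReesAlgebra I' hI' :=
    AlgHom.codRestrict ((laurentMap α.toAlgHom).comp (extendedReesAlgebra J' hJ').val)
      (extendedReesAlgebra I' hI') (fun p => hmemG p p.2)
  have hFval : ∀ p, ((F p : extendedReesAlgebra J' hJ') : AddMonoidAlgebra B ℤ)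
      = laurentMap α.symm.toAlgHom (p : AddMonoidAlgebra B ℤ) := fun p => rfl
  have hGval : ∀ p, ((G p : extendedReesAlgebra I' hI') : AddMonoidAlgebra B ℤ)
      = laurentMap α.toAlgHom (p : AddMonoidAlgebra B ℤ) := fun p => rfl
  refine ⟨AlgEquiv.ofAlgHom F G ?_ ?_, ?_, ?_⟩
  · apply AlgHom.ext; intro q
    apply Subtype.ext
    apply AddMonoidAlgebra.coeff_injective
    apply Finsupp.ext; intro k
    rw [AlgHom.comp_apply, AlgHom.id_apply, hFval, laurentMap_apply, hGval, laurentMap_apply]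
    simp
  · apply AlgHom.ext; intro q
    apply Subtype.ext
    apply AddMonoidAlgebra.coeff_injective
    apply Finsupp.ext; intro k
    rw [AlgHom.comp_apply, AlgHom.id_apply, hGval, laurentMap_apply, hFval, laurentMap_apply]
    simp
  · intro x k hx
    show ((F x : extendedReesAlgebra J' hJ') : AddMonoidAlgebra B ℤ).coeff.support ⊆ {k}
    rw [hFval]
    exact (laurentMap_support _ _).trans hx
  · apply Subtype.ext
    show laurentMap α.symm.toAlgHom (laurentT B) = laurentT B
    rw [laurentT]
    show lmapFun _ _ = _
    rw [lmapFun_single, map_one]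

end Transfer

section FreeStuff

open FreeAlgebra

variable {K : Type} [Field K]

theorem alghom_comp_lift {X D C : Type} [Semiring D] [Algebra K D] [Semiring C] [Algebra K C]
    (v : X → D) (F : D →ₐ[K] C) :
    F.comp (FreeAlgebra.lift K v) = FreeAlgebra.lift K (fun x => F (v x)) := by
  apply FreeAlgebra.hom_ext
  funext x
  simp [FreeAlgebra.lift_ι_apply]

/-- An automorphism of a free algebra from substitutions that are mutually inverse. -/
noncomputable def freeAlgAut {X : Type} (u v : X → FreeAlgebra K X)
    (h1 : ∀ x, FreeAlgebra.lift K v (u x) = FreeAlgebra.ι K x)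
    (h2 : ∀ x, FreeAlgebra.lift K u (v x) = FreeAlgebra.ι K x) :
    FreeAlgebra K X ≃ₐ[K] FreeAlgebra K X :=
  AlgEquiv.ofAlgHom (FreeAlgebra.lift K u) (FreeAlgebra.lift K v)
    (by
      apply FreeAlgebra.hom_ext
      funext x
      simp [FreeAlgebra.lift_ι_apply, h2 x])
    (by
      apply FreeAlgebra.hom_ext
      funext x
      simp [FreeAlgebra.lift_ι_apply, h1 x])

theorem freeAlgAut_apply {X : Type} (u v : X → FreeAlgebra K X) (h1 h2)
    (z : FreeAlgebra K X) : freeAlgAut u v h1 h2 z = FreeAlgebra.lift K u z := rfl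

variable {n m : ℕ}

/-- The canonical embedding of the free algebra on the `x` variables. -/
noncomputable def kmap (K : Type) [Field K] (n m : ℕ) :
    FreeAlgebra K (Fin n) →ₐ[K] FreeAlgebra K (Fin n ⊕ Fin m) :=
  FreeAlgebra.lift K fun i : Fin n => (ι K (Sum.inl i) : FreeAlgebra K (Fin n ⊕ Fin m))

/-- The canonical embedding of the free algebra on the `y` variables. -/
noncomputable def kmap' (K : Type) [Field K] (n m : ℕ) :
    FreeAlgebra K (Fin m) →ₐ[K] FreeAlgebra K (Fin n ⊕ Fin m) :=
  FreeAlgebra.lift K fun j : Fin m => (ι K (Sum.inr j) : FreeAlgebra K (Fin n ⊕ Fin m))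

theorem comp_kmap {C : Type} [Semiring C] [Algebra K C]
    (F : FreeAlgebra K (Fin n ⊕ Fin m) →ₐ[K] C) :
    F.comp (kmap K n m) = FreeAlgebra.lift K (fun i => F (ι K (Sum.inl i))) := by
  rw [kmap, alghom_comp_lift]

theorem comp_kmap' {C : Type} [Semiring C] [Algebra K C]
    (F : FreeAlgebra K (Fin n ⊕ Fin m) →ₐ[K] C) :
    F.comp (kmap' K n m) = FreeAlgebra.lift K (fun j => F (ι K (Sum.inr j))) := by
  rw [kmap', alghom_comp_lift]

theorem lift_fix_kmap (w : Fin n ⊕ Fin m → FreeAlgebra K (Fin n ⊕ Fin m))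
    (hw : ∀ i, w (Sum.inl i) = ι K (Sum.inl i)) (a : FreeAlgebra K (Fin n)) :
    FreeAlgebra.lift K w (kmap K n m a) = kmap K n m a := by
  have h : (FreeAlgebra.lift K w).comp (kmap K n m) = kmap K n m := by
    rw [comp_kmap, kmap]
    congr 1
    funext i
    rw [FreeAlgebra.lift_ι_apply, hw]
  exact DFunLike.congr_fun h a

theorem lift_fix_kmap' (w : Fin n ⊕ Fin m → FreeAlgebra K (Fin n ⊕ Fin m))
    (hw : ∀ j, w (Sum.inr j) = ι K (Sum.inr j)) (a : FreeAlgebra K (Fin m)) :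
    FreeAlgebra.lift K w (kmap' K n m a) = kmap' K n m a := by
  have h : (FreeAlgebra.lift K w).comp (kmap' K n m) = kmap' K n m := by
    rw [comp_kmap', kmap']
    congr 1
    funext j
    rw [FreeAlgebra.lift_ι_apply, hw]
  exact DFunLike.congr_fun h a

/-- Elementary automorphism `y_j ↦ y_j + q j (x)`, `x_i ↦ x_i`. -/
noncomputable def elemY (q : Fin m → FreeAlgebra K (Fin n)) :
    FreeAlgebra K (Fin n ⊕ Fin m) ≃ₐ[K] FreeAlgebra K (Fin n ⊕ Fin m) :=
  freeAlgAut
    (Sum.elim (fun i => ι K (Sum.inl i)) (fun j => ι K (Sum.inr j) + kmap K n m (q j)))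
    (Sum.elim (fun i => ι K (Sum.inl i)) (fun j => ι K (Sum.inr j) - kmap K n m (q j)))
    (by
      rintro (i | j)
      · simp [FreeAlgebra.lift_ι_apply]
      · simp only [Sum.elim_inr, map_add, FreeAlgebra.lift_ι_apply]
        rw [lift_fix_kmap _ (fun i => by simp [FreeAlgebra.lift_ι_apply])]
        exact sub_add_cancel _ _)
    (by
      rintro (i | j)
      · simp [FreeAlgebra.lift_ι_apply]
      · simp only [Sum.elim_inr, map_sub, FreeAlgebra.lift_ι_apply]
        rw [lift_fix_kmap _ (fun i => by simp [FreeAlgebra.lift_ι_apply])]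
        exact add_sub_cancel_right _ _)

theorem elemY_x (q : Fin m → FreeAlgebra K (Fin n)) (i : Fin n) :
    elemY q (ι K (Sum.inl i)) = ι K (Sum.inl i) := by
  rw [elemY, freeAlgAut_apply, FreeAlgebra.lift_ι_apply]
  rfl

theorem elemY_y (q : Fin m → FreeAlgebra K (Fin n)) (j : Fin m) :
    elemY q (ι K (Sum.inr j)) = ι K (Sum.inr j) + kmap K n m (q j) := by
  rw [elemY, freeAlgAut_apply, FreeAlgebra.lift_ι_apply]
  rfl

/-- Elementary automorphism `x_i ↦ x_i + q i (y)`, `y_j ↦ y_j`. -/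
noncomputable def elemX (q : Fin n → FreeAlgebra K (Fin m)) :
    FreeAlgebra K (Fin n ⊕ Fin m) ≃ₐ[K] FreeAlgebra K (Fin n ⊕ Fin m) :=
  freeAlgAut
    (Sum.elim (fun i => ι K (Sum.inl i) + kmap' K n m (q i)) (fun j => ι K (Sum.inr j)))
    (Sum.elim (fun i => ι K (Sum.inl i) - kmap' K n m (q i)) (fun j => ι K (Sum.inr j)))
    (by
      rintro (i | j)
      · simp only [Sum.elim_inl, map_add, FreeAlgebra.lift_ι_apply]
        rw [lift_fix_kmap' _ (fun j => by simp [FreeAlgebra.lift_ι_apply])]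
        exact sub_add_cancel _ _
      · simp [FreeAlgebra.lift_ι_apply])
    (by
      rintro (i | j)
      · simp only [Sum.elim_inl, map_sub, FreeAlgebra.lift_ι_apply]
        rw [lift_fix_kmap' _ (fun j => by simp [FreeAlgebra.lift_ι_apply])]
        exact add_sub_cancel_right _ _
      · simp [FreeAlgebra.lift_ι_apply])

theorem elemX_x (q : Fin n → FreeAlgebra K (Fin m)) (i : Fin n) :
    elemX q (ι K (Sum.inl i)) = ι K (Sum.inl i) + kmap' K n m (q i) := by
  rw [elemX, freeAlgAut_apply, FreeAlgebra.lift_ι_apply]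
  rfl

theorem elemX_y (q : Fin n → FreeAlgebra K (Fin m)) (j : Fin m) :
    elemX q (ι K (Sum.inr j)) = ι K (Sum.inr j) := by
  rw [elemX, freeAlgAut_apply, FreeAlgebra.lift_ι_apply]
  rfl

end FreeStuff

section KerStuff

open FreeAlgebra

variable {K : Type} [Field K]

theorem mkAlgHom_eq_zero_iff {A : Type} [Ring A] [Algebra K A]
    (I : Submodule K A) (hI : I.IsTwoSidedIdeal) (a : A) :
    RingQuot.mkAlgHom K (fun a b : A => a - b ∈ I) a = 0 ↔ a ∈ I := by
  constructor
  · intro h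
    let It : TwoSidedIdeal A := TwoSidedIdeal.mk' (I : Set A) I.zero_mem
      (fun h1 h2 => I.add_mem h1 h2) (fun h1 => I.neg_mem h1)
      (fun {x y} h1 => (hI x y h1).1) (fun {x y} h1 => (hI y x h1).2)
    have hrel : ∀ ⦃x y : A⦄, (fun a b : A => a - b ∈ I) x y →
        It.ringCon.mk' x = It.ringCon.mk' y := by
      intro x y hxy
      show (x : It.ringCon.Quotient) = y
      rw [RingCon.eq, TwoSidedIdeal.rel_iff]
      exact (TwoSidedIdeal.mem_mk' _ _ _ _ _ _ _).mpr hxy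
    have h3 : RingQuot.mkRingHom (fun a b : A => a - b ∈ I) a = 0 := by
      have hc := RingQuot.mkAlgHom_coe K (fun a b : A => a - b ∈ I)
      calc RingQuot.mkRingHom (fun a b : A => a - b ∈ I) a
          = (RingQuot.mkAlgHom K (fun a b : A => a - b ∈ I) : A →+* _) a := by rw [hc]
        _ = 0 := h
    have h4 := RingQuot.lift_mkRingHom_apply It.ringCon.mk' hrel a
    rw [h3, map_zero] at h4
    have h5 : (a : It.ringCon.Quotient) = (0 : A) := h4.symm
    rw [RingCon.eq, TwoSidedIdeal.rel_iff] at h5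
    rw [sub_zero] at h5
    exact (TwoSidedIdeal.mem_mk' _ _ _ _ _ _ _).mp h5
  · intro h
    have := @RingQuot.mkAlgHom_rel K _ A _ _ (fun a b : A => a - b ∈ I) a 0 (by simpa using h)
    rw [map_zero] at this
    exact this

end KerStuff

section CharStuff

open FreeAlgebra

variable {K : Type} [Field K] {n m : ℕ}

/-- The map killing the `y` variables and sending the `x` variables to the quotient by `I`. -/
noncomputable def fmap (I : Submodule K (FreeAlgebra K (Fin n))) :
    FreeAlgebra K (Fin n ⊕ Fin m) →ₐ[K]
      RingQuot (fun a b : FreeAlgebra K (Fin n) => a - b ∈ I) :=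
  FreeAlgebra.lift K (Sum.elim
    (fun i => RingQuot.mkAlgHom K (fun a b : FreeAlgebra K (Fin n) => a - b ∈ I) (ι K i))
    (fun _ : Fin m => 0))

theorem fmap_x (I : Submodule K (FreeAlgebra K (Fin n))) (i : Fin n) :
    fmap (m := m) I (ι K (Sum.inl i)) =
      RingQuot.mkAlgHom K (fun a b : FreeAlgebra K (Fin n) => a - b ∈ I) (ι K i) :=
  FreeAlgebra.lift_ι_apply _ _

theorem fmap_y (I : Submodule K (FreeAlgebra K (Fin n))) (j : Fin m) :
    fmap I (ι K (Sum.inr j)) = 0 :=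
  FreeAlgebra.lift_ι_apply _ _

theorem fmap_kmap (I : Submodule K (FreeAlgebra K (Fin n))) (a : FreeAlgebra K (Fin n)) :
    fmap (m := m) I (kmap K n m a) =
      RingQuot.mkAlgHom K (fun a b : FreeAlgebra K (Fin n) => a - b ∈ I) a := by
  have h : (fmap (m := m) I).comp (kmap K n m) =
      RingQuot.mkAlgHom K (fun a b : FreeAlgebra K (Fin n) => a - b ∈ I) := by
    rw [comp_kmap]
    apply FreeAlgebra.hom_ext
    funext i
    simp only [Function.comp_apply, FreeAlgebra.lift_ι_apply, fmap_x]
  exact DFunLike.congr_fun h a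

/-- The map sending `y` variables to `0` and `x` variables to themselves. -/
noncomputable def thetamap (K : Type) [Field K] (n m : ℕ) :
    FreeAlgebra K (Fin n ⊕ Fin m) →ₐ[K] FreeAlgebra K (Fin n) :=
  FreeAlgebra.lift K (Sum.elim (fun i => ι K i) (fun _ : Fin m => 0))

theorem thetamap_x (i : Fin n) : thetamap K n m (ι K (Sum.inl i)) = ι K i :=
  FreeAlgebra.lift_ι_apply _ _

theorem thetamap_y (j : Fin m) : thetamap K n m (ι K (Sum.inr j)) = 0 :=
  FreeAlgebra.lift_ι_apply _ _

theorem mem_extIdeal_iff (I : Submodule K (FreeAlgebra K (Fin n))) (hI : I.IsTwoSidedIdeal)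
    (z : FreeAlgebra K (Fin n ⊕ Fin m)) :
    z ∈ twoSidedClosure K
        ((FreeAlgebra.lift K fun i : Fin n =>
            (ι K (Sum.inl i) : FreeAlgebra K (Fin n ⊕ Fin m))) '' (I : Set (FreeAlgebra K (Fin n)))
          ∪ Set.range fun j : Fin m => (ι K (Sum.inr j) : FreeAlgebra K (Fin n ⊕ Fin m)))
    ↔ fmap I z = 0 := by
  set S : Set (FreeAlgebra K (Fin n ⊕ Fin m)) :=
    (FreeAlgebra.lift K fun i : Fin n =>
        (ι K (Sum.inl i) : FreeAlgebra K (Fin n ⊕ Fin m))) '' (I : Set (FreeAlgebra K (Fin n)))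
      ∪ Set.range fun j : Fin m => (ι K (Sum.inr j) : FreeAlgebra K (Fin n ⊕ Fin m)) with hS
  have hSk : S = (kmap K n m) '' (I : Set (FreeAlgebra K (Fin n)))
      ∪ Set.range fun j : Fin m => (ι K (Sum.inr j) : FreeAlgebra K (Fin n ⊕ Fin m)) := rfl
  have hker : ∀ w ∈ twoSidedClosure K S, fmap I w = 0 := by
    intro w hw
    have hw' : w ∈ TwoSidedIdeal.span S := hw
    rw [TwoSidedIdeal.mem_span_iff] at hw'
    refine (TwoSidedIdeal.mem_ker (fmap I)).mp (hw' (TwoSidedIdeal.ker (fmap I)) ?_)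
    rw [hSk]
    rintro v (⟨a, ha, rfl⟩ | ⟨j, rfl⟩)
    · rw [SetLike.mem_coe, TwoSidedIdeal.mem_ker, fmap_kmap]
      exact (mkAlgHom_eq_zero_iff I hI a).mpr ha
    · rw [SetLike.mem_coe, TwoSidedIdeal.mem_ker]
      exact fmap_y I j
  constructor
  · exact hker z
  · intro hz
    have claim : ∀ w : FreeAlgebra K (Fin n ⊕ Fin m),
        w - kmap K n m (thetamap K n m w) ∈ twoSidedClosure K S := by
      intro w
      have hw : w ∈ Algebra.adjoin K (Set.range (ι K : (Fin n ⊕ Fin m) → _)) := by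
        rw [FreeAlgebra.adjoin_range_ι]; trivial
      induction hw using Algebra.adjoin_induction with
      | mem u hu =>
          obtain ⟨t, rfl⟩ := hu
          cases t with
          | inl i =>
              rw [thetamap_x, show kmap K n m (ι K i) = ι K (Sum.inl i) from
                FreeAlgebra.lift_ι_apply _ _, sub_self]
              exact zero_mem _
          | inr j =>
              rw [thetamap_y, map_zero, sub_zero]
              exact subset_twoSidedClosure K S (by rw [hS]; exact Or.inr ⟨j, rfl⟩)
      | algebraMap r =>
          rw [AlgHom.commutes, AlgHom.commutes, sub_self]
          exact zero_mem _
      | add u v hu hv ihu ihv =>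
          rw [map_add, map_add, add_sub_add_comm]
          exact add_mem ihu ihv
      | mul u v hu hv ihu ihv =>
          rw [map_mul, map_mul, show u * v -
              kmap K n m (thetamap K n m u) * kmap K n m (thetamap K n m v)
              = u * (v - kmap K n m (thetamap K n m v)) +
                (u - kmap K n m (thetamap K n m u)) * kmap K n m (thetamap K n m v) by
            noncomm_ring]
          exact add_mem ((twoSidedClosure_isTwoSidedIdeal K S u _ ihv).1)
            ((twoSidedClosure_isTwoSidedIdeal K S (kmap K n m (thetamap K n m v)) _ ihu).2)
    have h1 : fmap I (kmap K n m (thetamap K n m z)) = 0 := by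
      have h2 := hker _ (claim z)
      rw [map_sub, hz, zero_sub, neg_eq_zero] at h2
      exact h2
    rw [fmap_kmap] at h1
    have h3 : thetamap K n m z ∈ I := (mkAlgHom_eq_zero_iff I hI _).mp h1
    have h4 : kmap K n m (thetamap K n m z) ∈ twoSidedClosure K S :=
      subset_twoSidedClosure K S (by rw [hSk]; exact Or.inl ⟨_, h3, rfl⟩)
    rw [show z = (z - kmap K n m (thetamap K n m z)) + kmap K n m (thetamap K n m z) from
      (sub_add_cancel _ _).symm]
    exact add_mem (claim z) h4

end CharStuff


open FreeAlgebra in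
theorem rees_algebras_of_extended_ideals_isomorphic
    {K : Type} [Field K] {n m : ℕ} (hn : 1 ≤ n) (hm : 1 ≤ m)
    (I J : Submodule K (FreeAlgebra K (Fin n)))
    (hI : I.IsTwoSidedIdeal) (hJ : J.IsTwoSidedIdeal)
    (hiso : Nonempty
      (RingQuot (fun a b : FreeAlgebra K (Fin n) => a - b ∈ I) ≃ₐ[K]
        RingQuot (fun a b : FreeAlgebra K (Fin n) => a - b ∈ J)))
    (hgen : ∃ c : Fin m → RingQuot (fun a b : FreeAlgebra K (Fin n) => a - b ∈ I),
      Algebra.adjoin K (Set.range c) = ⊤) :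
    ∃ e : extendedReesAlgebra
            (twoSidedClosure K
              ((FreeAlgebra.lift K fun i : Fin n =>
                  (ι K (Sum.inl i) : FreeAlgebra K (Fin n ⊕ Fin m))) '' (I : Set (FreeAlgebra K (Fin n)))
                ∪ Set.range fun j : Fin m => (ι K (Sum.inr j) : FreeAlgebra K (Fin n ⊕ Fin m))))
            (twoSidedClosure_isTwoSidedIdeal K _) ≃ₐ[K]
          extendedReesAlgebra
            (twoSidedClosure K
              ((FreeAlgebra.lift K fun i : Fin n =>
                  (ι K (Sum.inl i) : FreeAlgebra K (Fin n ⊕ Fin m))) '' (J : Set (FreeAlgebra K (Fin n)))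
                ∪ Set.range fun j : Fin m => (ι K (Sum.inr j) : FreeAlgebra K (Fin n ⊕ Fin m))))
            (twoSidedClosure_isTwoSidedIdeal K _),
      IsGradedReesIso e ∧
        e ⟨laurentT _, laurentT_mem _ _⟩ = ⟨laurentT _, laurentT_mem _ _⟩ := by
  classical
  obtain ⟨φ⟩ := hiso
  obtain ⟨c, hc⟩ := hgen
  -- surjectivity facts
  have hsπI : Function.Surjective
      (RingQuot.mkAlgHom K (fun a b : FreeAlgebra K (Fin n) => a - b ∈ I)) :=
    RingQuot.mkAlgHom_surjective K _
  have hsc : Function.Surjective (FreeAlgebra.lift K c) := by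
    rw [← AlgHom.range_eq_top, ← Algebra.adjoin_range_eq_range_freeAlgebra_lift, hc]
  have hsb : Function.Surjective (FreeAlgebra.lift K (fun i : Fin n =>
      φ.symm (RingQuot.mkAlgHom K (fun a b : FreeAlgebra K (Fin n) => a - b ∈ J) (ι K i)))) := by
    have hbe : FreeAlgebra.lift K (fun i : Fin n =>
        φ.symm (RingQuot.mkAlgHom K (fun a b : FreeAlgebra K (Fin n) => a - b ∈ J) (ι K i)))
        = (φ.symm.toAlgHom).comp
            (RingQuot.mkAlgHom K (fun a b : FreeAlgebra K (Fin n) => a - b ∈ J)) := by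
      apply FreeAlgebra.hom_ext
      funext i
      simp [FreeAlgebra.lift_ι_apply]
    rw [hbe]
    exact (AlgEquiv.surjective φ.symm).comp (RingQuot.mkAlgHom_surjective K _)
  choose p hp using fun j : Fin m => hsπI (c j)
  choose r hr using fun i : Fin n => hsc
    (RingQuot.mkAlgHom K (fun a b : FreeAlgebra K (Fin n) => a - b ∈ I) (ι K i))
  choose s hs using fun i : Fin n => hsc
    (φ.symm (RingQuot.mkAlgHom K (fun a b : FreeAlgebra K (Fin n) => a - b ∈ J) (ι K i)))
  choose p' hp' using fun j : Fin m => hsb (c j)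
  -- the automorphism
  let α : FreeAlgebra K (Fin n ⊕ Fin m) ≃ₐ[K] FreeAlgebra K (Fin n ⊕ Fin m) :=
    (elemY (K := K) (fun j => -(p' j))).trans ((elemX (fun i => s i - r i)).trans (elemY p))
  -- composition identities
  have hA : (fmap (m := m) I).comp (elemY p).toAlgHom
      = FreeAlgebra.lift K (Sum.elim (fun i : Fin n =>
          RingQuot.mkAlgHom K (fun a b : FreeAlgebra K (Fin n) => a - b ∈ I) (ι K i)) c) := by
    apply FreeAlgebra.hom_ext
    funext t
    cases t with
    | inl i =>
        simp only [AlgHom.coe_comp, AlgEquiv.coe_toAlgHom, AlgHom.coe_coe,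
          Function.comp_apply, FreeAlgebra.lift_ι_apply, Sum.elim_inl, Sum.elim_inr]
        rw [elemY_x, fmap_x]
    | inr j =>
        simp only [AlgHom.coe_comp, AlgEquiv.coe_toAlgHom, AlgHom.coe_coe,
          Function.comp_apply, FreeAlgebra.lift_ι_apply, Sum.elim_inl, Sum.elim_inr]
        rw [elemY_y, map_add, fmap_y, fmap_kmap, hp, zero_add]
  have hF2κ' : ∀ w : FreeAlgebra K (Fin m),
      FreeAlgebra.lift K (Sum.elim (fun i : Fin n =>
          RingQuot.mkAlgHom K (fun a b : FreeAlgebra K (Fin n) => a - b ∈ I) (ι K i)) c)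
        (kmap' K n m w) = FreeAlgebra.lift K c w := by
    intro w
    have h := comp_kmap' (K := K) (n := n) (m := m)
      (FreeAlgebra.lift K (Sum.elim (fun i : Fin n =>
        RingQuot.mkAlgHom K (fun a b : FreeAlgebra K (Fin n) => a - b ∈ I) (ι K i)) c))
    have h2 : (fun j => FreeAlgebra.lift K (Sum.elim (fun i : Fin n =>
        RingQuot.mkAlgHom K (fun a b : FreeAlgebra K (Fin n) => a - b ∈ I) (ι K i)) c)
        (ι K (Sum.inr j))) = c := by
      funext j
      rw [FreeAlgebra.lift_ι_apply]
      rfl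
    rw [h2] at h
    exact DFunLike.congr_fun h w
  have hB : (FreeAlgebra.lift K (Sum.elim (fun i : Fin n =>
          RingQuot.mkAlgHom K (fun a b : FreeAlgebra K (Fin n) => a - b ∈ I) (ι K i)) c)).comp
        (elemX (fun i => s i - r i)).toAlgHom
      = FreeAlgebra.lift K (Sum.elim (fun i : Fin n =>
          φ.symm (RingQuot.mkAlgHom K (fun a b : FreeAlgebra K (Fin n) => a - b ∈ J) (ι K i)))
          c) := by
    apply FreeAlgebra.hom_ext
    funext t
    cases t with
    | inl i =>
        simp only [AlgHom.coe_comp, AlgEquiv.coe_toAlgHom, AlgHom.coe_coe,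
          Function.comp_apply, FreeAlgebra.lift_ι_apply, Sum.elim_inl, Sum.elim_inr]
        rw [elemX_x, map_add, map_sub, map_sub, hF2κ', hF2κ', hr, hs]
        simp only [FreeAlgebra.lift_ι_apply, Sum.elim_inl]
        abel
    | inr j =>
        simp only [AlgHom.coe_comp, AlgEquiv.coe_toAlgHom, AlgHom.coe_coe,
          Function.comp_apply, FreeAlgebra.lift_ι_apply, Sum.elim_inl, Sum.elim_inr]
        rw [elemX_y]
        simp only [FreeAlgebra.lift_ι_apply, Sum.elim_inr]
  have hF1κ : ∀ w : FreeAlgebra K (Fin n),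
      FreeAlgebra.lift K (Sum.elim (fun i : Fin n =>
          φ.symm (RingQuot.mkAlgHom K (fun a b : FreeAlgebra K (Fin n) => a - b ∈ J) (ι K i))) c)
        (kmap K n m w)
      = FreeAlgebra.lift K (fun i : Fin n =>
          φ.symm (RingQuot.mkAlgHom K (fun a b : FreeAlgebra K (Fin n) => a - b ∈ J) (ι K i)))
        w := by
    intro w
    have h := comp_kmap (K := K) (n := n) (m := m)
      (FreeAlgebra.lift K (Sum.elim (fun i : Fin n =>
        φ.symm (RingQuot.mkAlgHom K (fun a b : FreeAlgebra K (Fin n) => a - b ∈ J) (ι K i))) c))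
    have h2 : (fun i => FreeAlgebra.lift K (Sum.elim (fun i : Fin n =>
        φ.symm (RingQuot.mkAlgHom K (fun a b : FreeAlgebra K (Fin n) => a - b ∈ J) (ι K i))) c)
        (ι K (Sum.inl i)))
        = fun i : Fin n =>
          φ.symm (RingQuot.mkAlgHom K (fun a b : FreeAlgebra K (Fin n) => a - b ∈ J) (ι K i)) := by
      funext i
      rw [FreeAlgebra.lift_ι_apply]
      rfl
    rw [h2] at h
    exact DFunLike.congr_fun h w
  have hC : (FreeAlgebra.lift K (Sum.elim (fun i : Fin n =>
          φ.symm (RingQuot.mkAlgHom K (fun a b : FreeAlgebra K (Fin n) => a - b ∈ J) (ι K i)))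
          c)).comp (elemY (fun j => -(p' j))).toAlgHom
      = (φ.symm.toAlgHom).comp (fmap (m := m) J) := by
    apply FreeAlgebra.hom_ext
    funext t
    cases t with
    | inl i =>
        simp only [AlgHom.coe_comp, AlgEquiv.coe_toAlgHom, AlgHom.coe_coe,
          Function.comp_apply, FreeAlgebra.lift_ι_apply, Sum.elim_inl, Sum.elim_inr]
        rw [elemY_x, fmap_x]
        simp only [FreeAlgebra.lift_ι_apply, Sum.elim_inl]
    | inr j =>
        simp only [AlgHom.coe_comp, AlgEquiv.coe_toAlgHom, AlgHom.coe_coe,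
          Function.comp_apply, FreeAlgebra.lift_ι_apply, Sum.elim_inl, Sum.elim_inr]
        rw [elemY_y, map_add, map_neg, map_neg, hF1κ, hp', fmap_y, map_zero]
        simp only [FreeAlgebra.lift_ι_apply, Sum.elim_inr]
        abel
  -- the key identity
  have hfα : ∀ z : FreeAlgebra K (Fin n ⊕ Fin m),
      fmap (m := m) I (α z) = φ.symm (fmap (m := m) J z) := by
    intro z
    have e1 := DFunLike.congr_fun hA
      ((elemX (fun i => s i - r i)) ((elemY (fun j => -(p' j))) z))
    have e2 := DFunLike.congr_fun hB ((elemY (fun j => -(p' j))) z)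
    have e3 := DFunLike.congr_fun hC z
    simp only [AlgHom.coe_comp, Function.comp_apply, AlgEquiv.coe_toAlgHom,
      AlgHom.coe_coe] at e1 e2 e3
    have hαz : α z = (elemY p) ((elemX (fun i => s i - r i))
        ((elemY (fun j => -(p' j))) z)) := rfl
    rw [hαz, e1, e2, e3]
  -- transfer of ideals
  have hmap : Submodule.map α.toLinearMap
      (twoSidedClosure K
        ((FreeAlgebra.lift K fun i : Fin n =>
            (ι K (Sum.inl i) : FreeAlgebra K (Fin n ⊕ Fin m))) '' (J : Set (FreeAlgebra K (Fin n)))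
          ∪ Set.range fun j : Fin m => (ι K (Sum.inr j) : FreeAlgebra K (Fin n ⊕ Fin m))))
      = twoSidedClosure K
        ((FreeAlgebra.lift K fun i : Fin n =>
            (ι K (Sum.inl i) : FreeAlgebra K (Fin n ⊕ Fin m))) '' (I : Set (FreeAlgebra K (Fin n)))
          ∪ Set.range fun j : Fin m => (ι K (Sum.inr j) : FreeAlgebra K (Fin n ⊕ Fin m))) := by
    ext z
    rw [Submodule.mem_map]
    constructor
    · rintro ⟨w, hw, rfl⟩
      rw [AlgEquiv.toLinearMap_apply, mem_extIdeal_iff I hI, hfα w]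
      rw [mem_extIdeal_iff J hJ] at hw
      rw [hw, map_zero]
    · intro hz
      refine ⟨α.symm z, ?_, by simp⟩
      rw [mem_extIdeal_iff J hJ]
      have h1 := hfα (α.symm z)
      rw [AlgEquiv.apply_symm_apply] at h1
      rw [mem_extIdeal_iff I hI] at hz
      rw [hz] at h1
      exact (AlgEquiv.injective φ.symm) (by rw [← h1, map_zero])
  exact rees_transfer α (twoSidedClosure_isTwoSidedIdeal K _)
    (twoSidedClosure_isTwoSidedIdeal K _) hmap
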